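/- If A is a vertex of the polytope Ω_n^d of d-dimensional polystochastic matrices of order n, then the size of the support of A is at most n^d − (n−1)^d. -/

import Mathlib

noncomputable def gg (m : ℕ) (b : Fin m) (a : Fin (m+1)) : ℝ :=
  (if a = b.castSucc then 1 else 0) - (if a = Fin.last m then 1 else 0)

lemma gg_sum (m : ℕ) (b : Fin m) : ∑ a : Fin (m+1), gg m b a = 0 := by
  simp [gg, Finset.sum_sub_distrib]

noncomputable def FF (m d : ℕ) (β : Fin d → Fin m) (α : Fin d → Fin (m+1)) : ℝ :=
  ∏ k, gg m (β k) (α k)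

lemma FF_line (m d : ℕ) (β : Fin d → Fin m) (k : Fin d) (α : Fin d → Fin (m+1)) :
    ∑ x : Fin (m+1), FF m d β (Function.update α k x) = 0 := by
  have key : ∀ x : Fin (m+1), FF m d β (Function.update α k x)
      = gg m (β k) x * ∏ j ∈ Finset.univ.erase k, gg m (β j) (α j) := by
    intro x
    rw [FF, ← Finset.mul_prod_erase _ _ (Finset.mem_univ k), Function.update_self]
    congr 1
    exact Finset.prod_congr rfl fun j hj => by
      rw [Function.update_of_ne (Finset.ne_of_mem_erase hj)]
  simp_rw [key, ← Finset.sum_mul, gg_sum, zero_mul]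

lemma FF_eval (m d : ℕ) (β β' : Fin d → Fin m) :
    FF m d β (fun k => (β' k).castSucc) = if β' = β then 1 else 0 := by
  have key : ∀ k, gg m (β k) ((β' k).castSucc) = if β' k = β k then 1 else 0 := by
    intro k
    rw [gg, if_neg (Fin.castSucc_lt_last _).ne]
    simp [Fin.castSucc_inj]
  rw [FF]
  simp_rw [key]
  by_cases h : β' = β
  · subst h; simp
  · rw [if_neg h]
    obtain ⟨k, hk⟩ := Function.ne_iff.mp h
    exact Finset.prod_eq_zero (Finset.mem_univ k) (if_neg hk)

def isPolystochastic (d n : ℕ) (A : (Fin d → Fin n) → ℝ) : Prop :=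
  (∀ α, 0 ≤ A α) ∧
  ∀ (k : Fin d) (α : Fin d → Fin n), ∑ x : Fin n, A (Function.update α k x) = 1

def isVertex (d n : ℕ) (A : (Fin d → Fin n) → ℝ) : Prop :=
  isPolystochastic d n A ∧
  ∀ B C : (Fin d → Fin n) → ℝ, isPolystochastic d n B → isPolystochastic d n C →
    ∀ t : ℝ, 0 < t → t < 1 → (∀ α, A α = t * B α + (1 - t) * C α) → B = A ∧ C = A

def isMPerm (d n : ℕ) (A : (Fin d → Fin n) → ℝ) : Prop :=
  isPolystochastic d n A ∧ ∀ α, A α = 0 ∨ A α = 1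

def msupport {d n : ℕ} (A : (Fin d → Fin n) → ℝ) : Set (Fin d → Fin n) := {α | A α ≠ 0}

theorem vertex_support_size_le {d n : ℕ} (A : (Fin d → Fin n) → ℝ)
    (hA : isVertex d n A) :
    (msupport A).ncard ≤ n ^ d - (n - 1) ^ d := by
  classical
  obtain _ | m := n
  · -- n = 0
    rcases Nat.eq_zero_or_pos d with hd | hd
    · subst hd
      -- index type is a singleton; vertex forces A = 0
      have hzero : ∀ α : Fin 0 → Fin 0, A α = 0 := by
        intro α
        have hB : isPolystochastic 0 0 (fun β => 2 * A β) := by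
          refine ⟨fun β => ?_, fun k => k.elim0⟩
          have h0 := hA.1.1 β
          show (0:ℝ) ≤ 2 * A β
          linarith
        have hC : isPolystochastic 0 0 (fun _ => (0:ℝ)) :=
          ⟨fun _ => le_refl 0, fun k => k.elim0⟩
        have := (hA.2 _ _ hB hC (1/2) (by norm_num) (by norm_num)
          (fun β => by ring)).1
        have := congrFun this α
        linarith
      have : msupport A = ∅ := by
        ext α; simp [msupport, hzero α]
      simp [this]
    · have : IsEmpty (Fin d → Fin 0) := by
        refine ⟨fun f => (f ⟨0, hd⟩).elim0⟩
      have : msupport A = ∅ := Set.eq_empty_of_isEmpty _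
      simp [this]
  · -- n = m + 1
    simp only [Nat.add_sub_cancel]
    by_contra hcard
    push_neg at hcard
    set S : Finset (Fin d → Fin (m+1)) := Finset.univ.filter (fun α => A α ≠ 0) with hS
    have hsupp : msupport A = ↑S := by
      ext α; simp [msupport, hS]
    rw [hsupp, Set.ncard_coe_finset] at hcard
    -- cardinalities
    have hcards : (Finset.univ.filter (fun α => A α = 0)).card + S.card
        = (m+1) ^ d := by
      rw [hS]
      have := Finset.card_filter_add_card_filter_not (s := Finset.univ)
        (p := fun α : Fin d → Fin (m+1) => A α = 0)
      simpa [Finset.card_univ] using this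
    have hpow : m ^ d ≤ (m+1) ^ d := Nat.pow_le_pow_left (Nat.le_succ m) d
    have hJlt : (Finset.univ.filter (fun α => A α = 0)).card < m ^ d := by omega
    -- the linear map
    have hcardJ : Fintype.card {α : Fin d → Fin (m+1) // A α = 0}
        = (Finset.univ.filter (fun α => A α = 0)).card := by
      rw [Fintype.card_subtype]
    set T : ((Fin d → Fin m) → ℝ) →ₗ[ℝ] ({α : Fin d → Fin (m+1) // A α = 0} → ℝ) :=
      LinearMap.pi (fun αh => ∑ β : Fin d → Fin m, FF m d β αh.1 • LinearMap.proj β)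
      with hT
    have hTapply : ∀ f (αh : {α : Fin d → Fin (m+1) // A α = 0}),
        T f αh = ∑ β, FF m d β αh.1 * f β := by
      intro f αh
      simp [hT, LinearMap.pi_apply, LinearMap.sum_apply]
    have hnotinj : ¬ Function.Injective T := by
      intro hinj
      have := LinearMap.finrank_le_finrank_of_injective hinj
      rw [Module.finrank_fintype_fun_eq_card, Module.finrank_fintype_fun_eq_card,
        hcardJ, Fintype.card_fun, Fintype.card_fin, Fintype.card_fin] at this
      omega
    rw [Function.not_injective_iff] at hnotinj
    obtain ⟨f, g, hfg, hfgne⟩ := hnotinj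
    set h := f - g with hh
    have hh0 : h ≠ 0 := sub_ne_zero_of_ne hfgne
    have hTh : T h = 0 := by rw [hh, map_sub, hfg, sub_self]
    obtain ⟨β', hβ'⟩ := Function.ne_iff.mp hh0
    simp only [Pi.zero_apply] at hβ'
    -- the perturbation vector
    set v : (Fin d → Fin (m+1)) → ℝ := fun α => ∑ β, FF m d β α * h β with hv
    have hv0 : ∀ α, A α = 0 → v α = 0 := by
      intro α hα
      have := congrFun hTh ⟨α, hα⟩
      rw [hTapply] at this
      simpa [hv] using this
    have hvline : ∀ (k : Fin d) (α : Fin d → Fin (m+1)),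
        ∑ x : Fin (m+1), v (Function.update α k x) = 0 := by
      intro k α
      rw [hv]
      rw [Finset.sum_comm]
      simp_rw [← Finset.sum_mul, FF_line, zero_mul]
      simp
    have hvβ' : v (fun k => (β' k).castSucc) = h β' := by
      rw [hv]
      simp_rw [FF_eval, ite_mul, one_mul, zero_mul]
      exact Finset.sum_ite_eq Finset.univ β' h |>.trans (if_pos (Finset.mem_univ β'))
    -- choose epsilon
    set M : ℝ := ∑ α, |v α| with hM
    have hMnonneg : 0 ≤ M := Finset.sum_nonneg fun α _ => abs_nonneg _
    have hMle : ∀ α, |v α| ≤ M := fun α =>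
      Finset.single_le_sum (f := fun α => |v α|) (fun α _ => abs_nonneg _)
        (Finset.mem_univ α)
    have hne : Nonempty (Fin d → Fin (m+1)) := ⟨fun _ => 0⟩
    set a : ℝ := Finset.univ.inf' (Finset.univ_nonempty) (fun α => if A α = 0 then 1 else A α)
      with ha
    have hapos : 0 < a := by
      rw [ha]
      apply Finset.lt_inf'_iff (α := ℝ) _ |>.mpr
      intro α _
      by_cases hα : A α = 0
      · simp [hα]
      · simp only [if_neg hα]
        exact lt_of_le_of_ne (hA.1.1 α) (Ne.symm hα)
    set ε : ℝ := a / (M + 1) with hε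
    have hεpos : 0 < ε := div_pos hapos (by linarith)
    have hbound : ∀ α, ε * |v α| ≤ A α := by
      intro α
      by_cases hα : A α = 0
      · rw [hv0 α hα, hα]; simp
      · have h1 : a ≤ A α := by
          rw [ha]
          have := Finset.inf'_le (f := fun α => if A α = 0 then 1 else A α)
            (Finset.mem_univ α)
          simpa only [if_neg hα] using this
        have h2 : ε * |v α| ≤ a := by
          rw [hε, div_mul_eq_mul_div, div_le_iff₀ (by linarith)]
          have := hMle α
          nlinarith [abs_nonneg (v α)]
        linarith
    -- build B and C
    set B : (Fin d → Fin (m+1)) → ℝ := fun α => A α + ε * v α with hB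
    set C : (Fin d → Fin (m+1)) → ℝ := fun α => A α - ε * v α with hC
    have habs : ∀ α, |ε * v α| ≤ A α := by
      intro α
      rw [abs_mul, abs_of_pos hεpos]
      exact hbound α
    have hBpoly : isPolystochastic d (m+1) B := by
      constructor
      · intro α
        have := (abs_le.mp (habs α)).1
        simp only [hB]
        linarith
      · intro k α
        simp only [hB]
        rw [Finset.sum_add_distrib, hA.1.2 k α, ← Finset.mul_sum, hvline, mul_zero, add_zero]
    have hCpoly : isPolystochastic d (m+1) C := by
      constructor
      · intro α
        have := (abs_le.mp (habs α)).2
        simp only [hC]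
        linarith
      · intro k α
        simp only [hC]
        rw [Finset.sum_sub_distrib, hA.1.2 k α, ← Finset.mul_sum, hvline, mul_zero, sub_zero]
    have hBA := (hA.2 B C hBpoly hCpoly (1/2) (by norm_num) (by norm_num)
      (fun α => by simp only [hB, hC]; ring)).1
    have hfin := congrFun hBA (fun k => (β' k).castSucc)
    simp only [hB, hvβ'] at hfin
    have : ε * h β' = 0 := by linarith
    rcases mul_eq_zero.mp this with h' | h'
    · exact absurd h' (ne_of_gt hεpos)
    · exact hβ' h'
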